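/- For a nonnegative random variable X with distribution function F and α>0 with m(α)=E[X^α]<∞, the function x^α(1-G_F(x)) tends to m(α) as x→∞, where G_F is the Williamson transform with parameter α. -/

import Mathlib

open MeasureTheory Filter Topology Real Set

theorem stmt6 {Ω : Type*} [MeasurableSpace Ω] (μ : Measure Ω) [IsProbabilityMeasure μ]
    (X : Ω → ℝ) (hX : Measurable X) (hXnn : ∀ ω, 0 ≤ X ω)
    (α : ℝ) (hα : 0 < α)
    (hint : Integrable (fun ω => X ω ^ α) μ)
    (G : ℝ → ℝ)
    (hG : ∀ x > 0, G x = ∫ ω in {ω | X ω ≤ x}, (1 - (X ω / x) ^ α) ∂μ) :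
    Tendsto (fun x => x ^ α * (1 - G x)) atTop (𝓝 (∫ ω, X ω ^ α ∂μ)) := by
  have hXα : ∀ ω, 0 ≤ X ω ^ α := fun ω => Real.rpow_nonneg (hXnn ω) α
  have hcont : Continuous fun y : ℝ => y ^ α :=
    continuous_id.rpow_const fun y => Or.inr hα.le
  have hmeas : Measurable fun ω => X ω ^ α := hcont.measurable.comp hX
  have hmin : ∀ x : ℝ, Integrable (fun ω => min (X ω ^ α) (x ^ α)) μ := by
    intro x
    exact hint.inf (integrable_const (x ^ α))
  have key : ∀ x : ℝ, 0 < x → x ^ α * (1 - G x) = ∫ ω, min (X ω ^ α) (x ^ α) ∂μ := by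
    intro x hx
    have hxα : (0:ℝ) < x ^ α := Real.rpow_pos_of_pos hx α
    have hs : MeasurableSet {ω | X ω ≤ x} := measurableSet_le hX measurable_const
    set s : Set Ω := {ω | X ω ≤ x} with hs_def
    have heq : ∀ ω, (X ω / x) ^ α = X ω ^ α / x ^ α := fun ω =>
      Real.div_rpow (hXnn ω) hx.le α
    have hint_s : IntegrableOn (fun ω => (X ω / x) ^ α) s μ := by
      have : Integrable (fun ω => X ω ^ α / x ^ α) μ := hint.div_const _
      exact (this.congr (Filter.Eventually.of_forall fun ω => (heq ω).symm)).integrableOn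
    have hconst : IntegrableOn (fun _ : Ω => (1:ℝ)) s μ :=
      (integrable_const 1).integrableOn
    have hG_split : G x = (μ s).toReal - ∫ ω in s, (X ω / x) ^ α ∂μ := by
      rw [hG x hx, integral_sub hconst hint_s]
      simp
      rfl
    -- split RHS
    have hmin_s : ∀ ω ∈ s, min (X ω ^ α) (x ^ α) = X ω ^ α := by
      intro ω hω
      exact min_eq_left (Real.rpow_le_rpow (hXnn ω) hω hα.le)
    have hmin_sc : ∀ ω ∈ sᶜ, min (X ω ^ α) (x ^ α) = x ^ α := by
      intro ω hω
      have hxX : x ≤ X ω := le_of_lt (not_le.mp hω)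
      exact min_eq_right (Real.rpow_le_rpow hx.le hxX hα.le)
    have hsplit : ∫ ω, min (X ω ^ α) (x ^ α) ∂μ
        = (∫ ω in s, X ω ^ α ∂μ) + (μ sᶜ).toReal * x ^ α := by
      rw [← integral_add_compl hs (hmin x)]
      congr 1
      · exact setIntegral_congr_fun hs hmin_s
      · rw [setIntegral_congr_fun hs.compl hmin_sc, setIntegral_const]
        simp [smul_eq_mul]
        exact Or.inl rfl
    have hcompl : (μ sᶜ).toReal = 1 - (μ s).toReal := by
      have h1 : μ sᶜ = 1 - μ s := by
        rw [measure_compl hs (measure_ne_top μ s)]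
        simp
      rw [h1, ENNReal.toReal_sub_of_le (prob_le_one) (by simp)]
      simp
    have hdiv : ∫ ω in s, (X ω / x) ^ α ∂μ = (∫ ω in s, X ω ^ α ∂μ) / x ^ α := by
      rw [← integral_div]
      exact setIntegral_congr_fun hs fun ω _ => heq ω
    rw [hsplit, hG_split, hdiv, hcompl]
    field_simp
    ring
  -- dominated convergence
  have hDCT : Tendsto (fun x => ∫ ω, min (X ω ^ α) (x ^ α) ∂μ) atTop
      (𝓝 (∫ ω, X ω ^ α ∂μ)) := by
    apply tendsto_integral_filter_of_dominated_convergence (fun ω => X ω ^ α)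
    · exact Filter.Eventually.of_forall fun x =>
        ((hmeas.min measurable_const).aestronglyMeasurable)
    · filter_upwards [eventually_gt_atTop (0:ℝ)] with x hx
      refine ae_of_all μ fun ω => ?_
      rw [Real.norm_eq_abs,
        abs_of_nonneg (le_min (hXα ω) (Real.rpow_nonneg hx.le α))]
      exact min_le_left _ _
    · exact hint
    · refine ae_of_all μ fun ω => ?_
      refine Tendsto.congr' ?_ tendsto_const_nhds
      filter_upwards [eventually_ge_atTop (X ω)] with x hx
      exact (min_eq_left (Real.rpow_le_rpow (hXnn ω) hx hα.le)).symm
  refine hDCT.congr' ?_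
  filter_upwards [eventually_gt_atTop (0:ℝ)] with x hx
  exact (key x hx).symm
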